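/- Let γ ∈ ℂ and b ∈ ℂ∖{0} with arg(b) ∈ (−π/4, π/4) (so that arg(b²) ∈ (−π/2, π/2)). Then, with complex powers taken in the principal branch: as z → +∞ in ℝ, ∫_1^z exp(b²·z̃²/2)·(b²·z̃²)^γ dz̃ is asymptotically equivalent to (1/b)·exp(b²·z²/2)·(b²·z²)^γ/(b·z), and ∫_1^z exp(b²·z̃²/2)·(b²·z̃²)^γ·(b·z̃) dz̃ is asymptotically equivalent to (1/b)·exp(b²·z²/2)·(b²·z²)^γ; and as z → −∞ in ℝ, the same two asymptotic equivalences hold with the integrals taken from −1 to z. -/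

import Mathlib

open Complex Filter Asymptotics


lemma tendsto_exp_sq_rpow (a q : ℝ) (ha : 0 < a) :
    Tendsto (fun z : ℝ => Real.exp (a * z ^ 2 / 2) * z ^ q) atTop atTop := by
  have hlin : Tendsto (fun z : ℝ => a / 2 * z - |q|) atTop atTop :=
    tendsto_atTop_add_const_right _ _ ((tendsto_id.const_mul_atTop (by positivity)))
  have h1 : Tendsto (fun z : ℝ => z * (a / 2 * z - |q|)) atTop atTop :=
    Tendsto.atTop_mul_atTop₀ tendsto_id hlin
  have h2 : Tendsto (fun z : ℝ => Real.exp (z * (a / 2 * z - |q|))) atTop atTop :=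
    Real.tendsto_exp_atTop.comp h1
  apply tendsto_atTop_mono' _ _ h2
  filter_upwards [eventually_ge_atTop (1:ℝ)] with z hz
  have hz0 : (0:ℝ) < z := by linarith
  rw [Real.rpow_def_of_pos hz0, ← Real.exp_add]
  apply Real.exp_le_exp.2
  have hlog0 : 0 ≤ Real.log z := Real.log_nonneg hz
  have hlogz : Real.log z ≤ z := Real.log_le_sub_one_of_pos hz0 |>.trans (by linarith)
  have : -(|q| * z) ≤ q * Real.log z := by
    have h3 : -(|q| * Real.log z) ≤ q * Real.log z := by
      have := neg_abs_le q
      nlinarith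
    have h4 : |q| * Real.log z ≤ |q| * z := by
      have := abs_nonneg q; nlinarith
    linarith
  nlinarith

lemma contP (a p : ℝ) : ContinuousOn (fun t : ℝ => Real.exp (a * t ^ 2 / 2) * t ^ p)
    (Set.Ici 1) := by
  apply ContinuousOn.mul (Continuous.continuousOn (by continuity))
  exact continuousOn_id.rpow_const fun t ht => Or.inl (by
    have : (1:ℝ) ≤ t := ht; positivity)

lemma intP_le (a p : ℝ) (ha : 0 < a) :
    ∀ᶠ z in atTop, (∫ t in (1:ℝ)..z, Real.exp (a * t ^ 2 / 2) * t ^ p)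
      ≤ 3 / a * (Real.exp (a * z ^ 2 / 2) * z ^ (p - 1)) := by
  set T : ℝ := max 1 (Real.sqrt (2 * (|p - 1| + 1) / a)) with hT
  have hT1 : (1:ℝ) ≤ T := le_max_left _ _
  set G : ℝ → ℝ := fun t => Real.exp (a * t ^ 2 / 2) * t ^ (p - 1) / a with hG
  -- derivative of G for t ≥ T
  have hGd : ∀ t ∈ Set.Ici T, HasDerivAt G
      (Real.exp (a * t ^ 2 / 2) * t ^ p * (1 + (p - 1) / (a * t ^ 2))) t := by
    intro t ht
    have ht1 : (1:ℝ) ≤ t := hT1.trans ht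
    have ht0 : (0:ℝ) < t := by linarith
    have h1 : HasDerivAt (fun t : ℝ => Real.exp (a * t ^ 2 / 2))
        (Real.exp (a * t ^ 2 / 2) * (a * t)) t := by
      have hin : HasDerivAt (fun t : ℝ => a * t ^ 2 / 2) (a * t) t := by
        have := ((hasDerivAt_pow 2 t).const_mul a).div_const 2
        simpa using this.congr_deriv (by ring)
      simpa using hin.exp
    have h2 : HasDerivAt (fun t : ℝ => t ^ (p - 1)) ((p - 1) * t ^ (p - 1 - 1)) t :=
      Real.hasDerivAt_rpow_const (Or.inl (ne_of_gt ht0))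
    have h3 := ((h1.mul h2).div_const a)
    apply h3.congr_deriv
    have e1 : t ^ (p - 1 - 1) = t ^ p / t / t := by
      rw [Real.rpow_sub ht0, Real.rpow_sub ht0, Real.rpow_one]
    have e2 : t ^ (p - 1) = t ^ p / t := by
      rw [Real.rpow_sub ht0, Real.rpow_one]
    rw [e1, e2]
    have ht' : t ≠ 0 := ne_of_gt ht0
    field_simp
  have hfac : ∀ t : ℝ, t ∈ Set.Ici T → (1:ℝ)/2 ≤ 1 + (p - 1) / (a * t ^ 2) := by
    intro t ht
    have ht1 : (1:ℝ) ≤ t := hT1.trans ht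
    have hts : Real.sqrt (2 * (|p - 1| + 1) / a) ≤ t := le_trans (le_max_right _ _) ht
    have h2 : 2 * (|p - 1| + 1) / a ≤ t ^ 2 := by
      have := Real.sq_sqrt (by positivity : (0:ℝ) ≤ 2 * (|p - 1| + 1) / a)
      nlinarith [Real.sqrt_nonneg (2 * (|p - 1| + 1) / a)]
    have ht0 : (0:ℝ) < t := lt_of_lt_of_le one_pos ht1
    have hat : 0 < a * t ^ 2 := mul_pos ha (pow_pos ht0 2)
    have key : -(1/2 : ℝ) ≤ (p - 1) / (a * t ^ 2) := by
      rw [le_div_iff₀ hat]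
      rw [div_le_iff₀ ha] at h2
      nlinarith [neg_abs_le (p - 1)]
    linarith
  set P : ℝ → ℝ := fun t => Real.exp (a * t ^ 2 / 2) * t ^ p with hP
  set D : ℝ → ℝ := fun t => P t * (1 + (p - 1) / (a * t ^ 2)) with hD
  have hPc : ContinuousOn P (Set.Ici 1) := contP a p
  have hDc : ContinuousOn D (Set.Ici 1) := by
    apply hPc.mul
    apply continuousOn_const.add (continuousOn_const.div _ _)
    · exact (continuous_const.mul (continuous_pow 2)).continuousOn
    · intro t ht
      have ht1 : (1:ℝ) ≤ t := ht
      positivity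
  have hPnn : ∀ t : ℝ, 1 ≤ t → 0 ≤ P t := by
    intro t ht
    have : (0:ℝ) < t := by linarith
    positivity
  filter_upwards [eventually_ge_atTop T,
    (tendsto_exp_sq_rpow a (p - 1) ha).eventually_ge_atTop
      (a * ∫ t in (1:ℝ)..T, P t)] with z hzT hzM
  have hz1 : (1:ℝ) ≤ z := hT1.trans hzT
  have hsub1 : Set.uIcc (1:ℝ) T ⊆ Set.Ici 1 := by
    rw [Set.uIcc_of_le hT1]; exact Set.Icc_subset_Ici_self
  have hsub2 : Set.uIcc T z ⊆ Set.Ici 1 := by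
    rw [Set.uIcc_of_le hzT]
    exact fun t htt => hT1.trans htt.1
  have ih1 : IntervalIntegrable P MeasureTheory.volume 1 T :=
    (hPc.mono hsub1).intervalIntegrable
  have ih2 : IntervalIntegrable P MeasureTheory.volume T z :=
    (hPc.mono hsub2).intervalIntegrable
  have ihD : IntervalIntegrable D MeasureTheory.volume T z :=
    (hDc.mono hsub2).intervalIntegrable
  have hftc : ∫ t in T..z, D t = G z - G T := by
    apply intervalIntegral.integral_eq_sub_of_hasDerivAt _ ihD
    intro t htt
    rw [Set.uIcc_of_le hzT] at htt
    exact hGd t htt.1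
  have hmono : (∫ t in T..z, P t) ≤ ∫ t in T..z, 2 * D t := by
    apply intervalIntegral.integral_mono_on hzT ih2 (ihD.const_mul 2)
    intro t htt
    have h5 := hfac t htt.1
    have h6 := hPnn t (hT1.trans htt.1)
    simp only [hD]
    nlinarith
  have hGT : 0 ≤ G T := by
    have : (0:ℝ) < T := by linarith
    simp only [hG]
    positivity
  have hGz : (∫ t in (1:ℝ)..T, P t) ≤ G z := by
    simp only [hG]
    rw [le_div_iff₀ ha]
    linarith [hzM]
  have hsplit : (∫ t in (1:ℝ)..z, P t) = (∫ t in (1:ℝ)..T, P t) + ∫ t in T..z, P t :=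
    (intervalIntegral.integral_add_adjacent_intervals ih1 ih2).symm
  have h2D : (∫ t in T..z, 2 * D t) = 2 * (G z - G T) := by
    rw [intervalIntegral.integral_const_mul, hftc]
  have hfin : (∫ t in (1:ℝ)..z, P t) ≤ 3 * G z := by
    rw [hsplit]
    calc (∫ t in (1:ℝ)..T, P t) + ∫ t in T..z, P t
        ≤ G z + 2 * (G z - G T) := by rw [← h2D]; exact add_le_add hGz hmono
      _ ≤ 3 * G z := by linarith
  calc (∫ t in (1:ℝ)..z, P t) ≤ 3 * G z := hfin
    _ = 3 / a * (Real.exp (a * z ^ 2 / 2) * z ^ (p - 1)) := by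
        simp only [hG]; ring


lemma key (h F ε : ℝ → ℂ) (C : ℝ)
    (hcont : ContinuousOn h (Set.Ici 1))
    (hεcont : ContinuousOn ε (Set.Ici 1))
    (hderiv : ∀ t ∈ Set.Ici (1:ℝ), HasDerivAt F (h t * (1 + ε t)) t)
    (hεlim : Tendsto ε atTop (nhds 0))
    (hFlim : Tendsto (fun z => ‖F z‖) atTop atTop)
    (hint : ∀ᶠ z in atTop, (∫ t in (1:ℝ)..z, ‖h t‖) ≤ C * ‖F z‖) :
    IsEquivalent atTop (fun z => ∫ t in (1:ℝ)..z, h t) F := by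
  rw [IsEquivalent, isLittleO_iff]
  intro c hc
  set δ : ℝ := c / (3 * (|C| + 1)) with hδdef
  have habs : (0:ℝ) < |C| + 1 := by positivity
  have hδ : 0 < δ := by positivity
  have hev : ∀ᶠ t in atTop, ‖ε t‖ ≤ δ := by
    have h0 := hεlim.norm
    rw [norm_zero] at h0
    exact h0.eventually_le_const hδ
  obtain ⟨T₀, hT₀⟩ := eventually_atTop.1 hev
  set T : ℝ := max T₀ 1 with hTdef
  have hT1 : (1:ℝ) ≤ T := le_max_right _ _
  have hTε : ∀ t : ℝ, T ≤ t → ‖ε t‖ ≤ δ := fun t ht => hT₀ t ((le_max_left _ _).trans ht)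
  set M : ℝ := ‖F 1‖ + ‖∫ t in (1:ℝ)..T, h t * ε t‖ with hM
  have hMnn : 0 ≤ M := by positivity
  filter_upwards [hint, eventually_ge_atTop T,
    hFlim.eventually_ge_atTop (3 * M / c)] with z hintz hzT hzM
  have hz1 : (1:ℝ) ≤ z := hT1.trans hzT
  have hFnn : 0 ≤ ‖F z‖ := norm_nonneg _
  -- integrability
  have hsub1T : Set.uIcc (1:ℝ) T ⊆ Set.Ici 1 := by
    rw [Set.uIcc_of_le hT1]; exact Set.Icc_subset_Ici_self
  have hsubTz : Set.uIcc T z ⊆ Set.Ici 1 := by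
    rw [Set.uIcc_of_le hzT]; exact fun t htt => hT1.trans htt.1
  have hsub1z : Set.uIcc (1:ℝ) z ⊆ Set.Ici 1 := by
    rw [Set.uIcc_of_le hz1]; exact Set.Icc_subset_Ici_self
  have ihh : IntervalIntegrable h MeasureTheory.volume 1 z :=
    (hcont.mono hsub1z).intervalIntegrable
  have ihhε : ∀ u v : ℝ, Set.uIcc u v ⊆ Set.Ici 1 →
      IntervalIntegrable (fun t => h t * ε t) MeasureTheory.volume u v :=
    fun u v hs => ((hcont.mul hεcont).mono hs).intervalIntegrable
  have ihn : ∀ u v : ℝ, Set.uIcc u v ⊆ Set.Ici 1 →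
      IntervalIntegrable (fun t => ‖h t‖) MeasureTheory.volume u v :=
    fun u v hs => ((hcont.norm.mono hs)).intervalIntegrable
  have ihD : IntervalIntegrable (fun t => h t * (1 + ε t)) MeasureTheory.volume 1 z :=
    ((hcont.mul (continuousOn_const.add hεcont)).mono hsub1z).intervalIntegrable
  -- FTC
  have hftc : (∫ t in (1:ℝ)..z, h t * (1 + ε t)) = F z - F 1 := by
    apply intervalIntegral.integral_eq_sub_of_hasDerivAt _ ihD
    exact fun t htt => hderiv t (hsub1z htt)
  have hdecomp : (∫ t in (1:ℝ)..z, h t) = F z - F 1 - ∫ t in (1:ℝ)..z, h t * ε t := by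
    rw [← hftc, ← intervalIntegral.integral_sub ihD (ihhε 1 z hsub1z)]
    congr 1; funext t; ring
  -- bound the error integral
  have hsplit : (∫ t in (1:ℝ)..z, h t * ε t)
      = (∫ t in (1:ℝ)..T, h t * ε t) + ∫ t in T..z, h t * ε t :=
    (intervalIntegral.integral_add_adjacent_intervals (ihhε 1 T hsub1T) (ihhε T z hsubTz)).symm
  have hnormint : ‖∫ t in T..z, h t * ε t‖ ≤ δ * ∫ t in (1:ℝ)..z, ‖h t‖ := by
    have h1 : ‖∫ t in T..z, h t * ε t‖ ≤ ∫ t in T..z, ‖h t * ε t‖ :=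
      intervalIntegral.norm_integral_le_integral_norm hzT
    have h2 : (∫ t in T..z, ‖h t * ε t‖) ≤ ∫ t in T..z, δ * ‖h t‖ := by
      apply intervalIntegral.integral_mono_on hzT ((ihhε T z hsubTz).norm)
        ((ihn T z hsubTz).const_mul δ)
      intro t htt
      rw [norm_mul, mul_comm δ]
      exact mul_le_mul_of_nonneg_left (hTε t htt.1) (norm_nonneg _)
    have h3 : (∫ t in T..z, ‖h t‖) ≤ ∫ t in (1:ℝ)..z, ‖h t‖ := by
      have := intervalIntegral.integral_add_adjacent_intervals
        (ihn 1 T hsub1T) (ihn T z hsubTz)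
      have hnn : 0 ≤ ∫ t in (1:ℝ)..T, ‖h t‖ :=
        intervalIntegral.integral_nonneg hT1 (fun u _ => norm_nonneg _)
      linarith [this]
    calc ‖∫ t in T..z, h t * ε t‖ ≤ ∫ t in T..z, ‖h t * ε t‖ := h1
      _ ≤ ∫ t in T..z, δ * ‖h t‖ := h2
      _ = δ * ∫ t in T..z, ‖h t‖ := intervalIntegral.integral_const_mul _ _
      _ ≤ δ * ∫ t in (1:ℝ)..z, ‖h t‖ := by nlinarith
  -- combine
  have hCabs : C * ‖F z‖ ≤ |C| * ‖F z‖ := by nlinarith [le_abs_self C]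
  have hMz : M ≤ c / 3 * ‖F z‖ := by
    rw [div_le_iff₀ hc] at hzM
    nlinarith
  have herr : ‖(∫ t in (1:ℝ)..z, h t) - F z‖ ≤ c * ‖F z‖ := by
    rw [hdecomp]
    have e1 : F z - F 1 - (∫ t in (1:ℝ)..z, h t * ε t) - F z
        = -(F 1) - ∫ t in (1:ℝ)..z, h t * ε t := by ring
    rw [e1]
    have h4 : ‖-(F 1) - ∫ t in (1:ℝ)..z, h t * ε t‖
        ≤ ‖F 1‖ + ‖∫ t in (1:ℝ)..z, h t * ε t‖ := by
      rw [sub_eq_add_neg]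
      exact (norm_add_le _ _).trans (by rw [norm_neg, norm_neg])
    have h5 : ‖∫ t in (1:ℝ)..z, h t * ε t‖
        ≤ ‖∫ t in (1:ℝ)..T, h t * ε t‖ + δ * ∫ t in (1:ℝ)..z, ‖h t‖ := by
      rw [hsplit]
      exact (norm_add_le _ _).trans (add_le_add le_rfl hnormint)
    have h6 : δ * (∫ t in (1:ℝ)..z, ‖h t‖) ≤ δ * (|C| * ‖F z‖) := by
      apply mul_le_mul_of_nonneg_left _ (le_of_lt hδ)
      exact hintz.trans hCabs
    have h7 : δ * (|C| * ‖F z‖) ≤ c / 3 * ‖F z‖ := by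
      rw [hδdef]
      rw [div_mul_eq_mul_div, div_le_iff₀ (by positivity : (0:ℝ) < 3 * (|C| + 1))]
      nlinarith [abs_nonneg C, norm_nonneg (F z)]
    calc ‖-(F 1) - ∫ t in (1:ℝ)..z, h t * ε t‖
        ≤ ‖F 1‖ + ‖∫ t in (1:ℝ)..z, h t * ε t‖ := h4
      _ ≤ M + δ * ∫ t in (1:ℝ)..z, ‖h t‖ := by rw [hM]; linarith [h5]
      _ ≤ c / 3 * ‖F z‖ + c / 3 * ‖F z‖ := add_le_add hMz (h6.trans h7)
      _ ≤ c * ‖F z‖ := by nlinarith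
  simpa using herr


lemma u_re (b : ℂ) (t : ℝ) : (b ^ 2 * (t : ℂ) ^ 2).re = (b ^ 2).re * t ^ 2 := by
  have h : b ^ 2 * (t : ℂ) ^ 2 = b ^ 2 * ((t ^ 2 : ℝ) : ℂ) := by push_cast; ring
  rw [h, Complex.mul_re, Complex.ofReal_re, Complex.ofReal_im]; ring

lemma hasDeriv_u (b : ℂ) (t : ℝ) :
    HasDerivAt (fun z : ℝ => b ^ 2 * (z : ℂ) ^ 2) (2 * b ^ 2 * t) t := by
  have hid : HasDerivAt (fun z : ℝ => (z : ℂ)) 1 t := by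
    simpa using (hasDerivAt_id t).ofReal_comp
  have hsq : HasDerivAt (fun z : ℝ => (z : ℂ) ^ 2) (1 * (t : ℂ) + (t : ℂ) * 1) t := by
    simpa [pow_two, Pi.mul_def] using hid.mul hid
  have := hsq.const_mul (b ^ 2)
  apply this.congr_deriv
  push_cast; ring

lemma deriv1 (γ b : ℂ) (hb : b ≠ 0) (hre : 0 < (b ^ 2).re) {t : ℝ} (ht : t ≠ 0) :
    HasDerivAt (fun z : ℝ => 1 / b * Complex.exp (b ^ 2 * (z : ℂ) ^ 2 / 2)
        * (b ^ 2 * (z : ℂ) ^ 2) ^ γ / (b * (z : ℂ)))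
      (Complex.exp (b ^ 2 * (t : ℂ) ^ 2 / 2) * (b ^ 2 * (t : ℂ) ^ 2) ^ γ
        * (1 + (2 * γ - 1) / (b ^ 2 * (t : ℂ) ^ 2))) t := by
  have htC : (t : ℂ) ≠ 0 := Complex.ofReal_ne_zero.2 ht
  have hu_ne : b ^ 2 * (t : ℂ) ^ 2 ≠ 0 := by
    apply mul_ne_zero (pow_ne_zero _ hb) (pow_ne_zero _ htC)
  have hslit : b ^ 2 * (t : ℂ) ^ 2 ∈ Complex.slitPlane := by
    left
    rw [u_re]
    positivity
  have hu := hasDeriv_u b t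
  have hexp : HasDerivAt (fun z : ℝ => Complex.exp (b ^ 2 * (z : ℂ) ^ 2 / 2))
      (Complex.exp (b ^ 2 * (t : ℂ) ^ 2 / 2) * (b ^ 2 * t)) t := by
    have := (hu.div_const 2).cexp
    apply this.congr_deriv
    ring
  have hpow : HasDerivAt (fun z : ℝ => (b ^ 2 * (z : ℂ) ^ 2) ^ γ)
      (γ * (b ^ 2 * (t : ℂ) ^ 2) ^ (γ - 1) * (2 * b ^ 2 * t)) t :=
    HasDerivAt.comp (h₂ := fun w : ℂ => w ^ γ) t (Complex.hasStrictDerivAt_cpow_const hslit).hasDerivAt hu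
  have hbt : HasDerivAt (fun z : ℝ => b * (z : ℂ)) b t := by
    have hid : HasDerivAt (fun z : ℝ => (z : ℂ)) 1 t := by
      simpa using (hasDerivAt_id t).ofReal_comp
    simpa using hid.const_mul b
  have hbt_ne : b * (t : ℂ) ≠ 0 := mul_ne_zero hb htC
  have hD := ((hexp.const_mul (1 / b)).mul hpow).div hbt hbt_ne
  apply hD.congr_deriv
  have hsub : (b ^ 2 * (t : ℂ) ^ 2) ^ (γ - 1)
      = (b ^ 2 * (t : ℂ) ^ 2) ^ γ / (b ^ 2 * (t : ℂ) ^ 2) := by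
    rw [Complex.cpow_sub _ _ hu_ne, Complex.cpow_one]
  rw [hsub]
  simp only [Pi.mul_apply]
  field_simp
  ring

lemma deriv2 (γ b : ℂ) (hb : b ≠ 0) (hre : 0 < (b ^ 2).re) {t : ℝ} (ht : t ≠ 0) :
    HasDerivAt (fun z : ℝ => 1 / b * Complex.exp (b ^ 2 * (z : ℂ) ^ 2 / 2)
        * (b ^ 2 * (z : ℂ) ^ 2) ^ γ)
      (Complex.exp (b ^ 2 * (t : ℂ) ^ 2 / 2) * (b ^ 2 * (t : ℂ) ^ 2) ^ γ * (b * (t : ℂ))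
        * (1 + 2 * γ / (b ^ 2 * (t : ℂ) ^ 2))) t := by
  have htC : (t : ℂ) ≠ 0 := Complex.ofReal_ne_zero.2 ht
  have hu_ne : b ^ 2 * (t : ℂ) ^ 2 ≠ 0 := by
    apply mul_ne_zero (pow_ne_zero _ hb) (pow_ne_zero _ htC)
  have hslit : b ^ 2 * (t : ℂ) ^ 2 ∈ Complex.slitPlane := by
    left; rw [u_re]; positivity
  have hu := hasDeriv_u b t
  have hexp : HasDerivAt (fun z : ℝ => Complex.exp (b ^ 2 * (z : ℂ) ^ 2 / 2))
      (Complex.exp (b ^ 2 * (t : ℂ) ^ 2 / 2) * (b ^ 2 * t)) t := by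
    have := (hu.div_const 2).cexp
    apply this.congr_deriv
    ring
  have hpow : HasDerivAt (fun z : ℝ => (b ^ 2 * (z : ℂ) ^ 2) ^ γ)
      (γ * (b ^ 2 * (t : ℂ) ^ 2) ^ (γ - 1) * (2 * b ^ 2 * t)) t :=
    HasDerivAt.comp (h₂ := fun w : ℂ => w ^ γ) t (Complex.hasStrictDerivAt_cpow_const hslit).hasDerivAt hu
  have hD := ((hexp.const_mul (1 / b)).mul hpow)
  apply hD.congr_deriv
  have hsub : (b ^ 2 * (t : ℂ) ^ 2) ^ (γ - 1)
      = (b ^ 2 * (t : ℂ) ^ 2) ^ γ / (b ^ 2 * (t : ℂ) ^ 2) := by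
    rw [Complex.cpow_sub _ _ hu_ne, Complex.cpow_one]
  rw [hsub]
  field_simp

lemma b2_re_pos (b : ℂ) (hb : b ≠ 0)
    (harg : Complex.arg b ∈ Set.Ioo (-(Real.pi / 4)) (Real.pi / 4)) : 0 < (b ^ 2).re := by
  obtain ⟨h1, h2⟩ := harg
  have habs : 0 < ‖b‖ := norm_pos_iff.mpr hb
  have hcos := Complex.cos_arg hb
  have hsin := Complex.sin_arg b
  have hre : (b ^ 2).re = b.re ^ 2 - b.im ^ 2 := by rw [pow_two, Complex.mul_re]; ring
  have hcospos : 0 < Real.cos (2 * Complex.arg b) :=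
    Real.cos_pos_of_mem_Ioo ⟨by linarith, by linarith⟩
  have hcos2 := Real.cos_two_mul (Complex.arg b)
  have hpy := Real.sin_sq_add_cos_sq (Complex.arg b)
  have hb_re : b.re = ‖b‖ * Real.cos (Complex.arg b) := by
    rw [hcos]; field_simp
  have hb_im : b.im = ‖b‖ * Real.sin (Complex.arg b) := by
    rw [hsin]; field_simp
  have key : Real.cos (Complex.arg b) ^ 2 - Real.sin (Complex.arg b) ^ 2
      = Real.cos (2 * Complex.arg b) := by linarith
  rw [hre, hb_re, hb_im]
  have e : (‖b‖ * Real.cos (Complex.arg b)) ^ 2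
      - (‖b‖ * Real.sin (Complex.arg b)) ^ 2
      = ‖b‖ * ‖b‖ * (Real.cos (Complex.arg b) ^ 2
        - Real.sin (Complex.arg b) ^ 2) := by ring
  rw [e, key]
  positivity

lemma norm_h (γ b : ℂ) (hb : b ≠ 0) {t : ℝ} (ht : 0 < t) :
    ‖Complex.exp (b ^ 2 * (t : ℂ) ^ 2 / 2) * (b ^ 2 * (t : ℂ) ^ 2) ^ γ‖
      = (‖b‖ ^ (2 * γ.re) / Real.exp (Complex.arg (b ^ 2) * γ.im))
        * (Real.exp ((b ^ 2).re * t ^ 2 / 2) * t ^ (2 * γ.re)) := by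
  have htC : (t : ℂ) ≠ 0 := Complex.ofReal_ne_zero.2 (ne_of_gt ht)
  have hu_ne : b ^ 2 * (t : ℂ) ^ 2 ≠ 0 :=
    mul_ne_zero (pow_ne_zero _ hb) (pow_ne_zero _ htC)
  have harg : Complex.arg (b ^ 2 * (t : ℂ) ^ 2) = Complex.arg (b ^ 2) := by
    rw [show b ^ 2 * (t : ℂ) ^ 2 = ((t ^ 2 : ℝ) : ℂ) * b ^ 2 by push_cast; ring]
    exact Complex.arg_real_mul _ (by positivity)
  have hre2 : (b ^ 2 * (t : ℂ) ^ 2 / 2).re = (b ^ 2).re * t ^ 2 / 2 := by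
    rw [show b ^ 2 * (t : ℂ) ^ 2 / 2 = b ^ 2 * ((t ^ 2 / 2 : ℝ) : ℂ) by push_cast; ring,
      Complex.mul_re, Complex.ofReal_re, Complex.ofReal_im]
    ring
  have habsu : ‖b ^ 2 * (t : ℂ) ^ 2‖ = (‖b‖ * t) ^ 2 := by
    rw [norm_mul, norm_pow, norm_pow, Complex.norm_real, Real.norm_eq_abs, abs_of_pos ht]; ring
  have hx : (0 : ℝ) ≤ ‖b‖ * t := by positivity
  have hrpow : ((‖b‖ * t) ^ 2) ^ γ.re = ‖b‖ ^ (2 * γ.re) * t ^ (2 * γ.re) := by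
    rw [← Real.rpow_natCast (‖b‖ * t) 2, ← Real.rpow_mul hx]
    norm_num
    rw [Real.mul_rpow (norm_nonneg b) (le_of_lt ht)]
  rw [norm_mul, Complex.norm_exp,
    Complex.norm_cpow_of_ne_zero hu_ne, harg, hre2, habsu, hrpow]
  ring

lemma hcont_exp_pow (γ b : ℂ) (hb : b ≠ 0) (hre : 0 < (b ^ 2).re) :
    ContinuousOn (fun t : ℝ => Complex.exp (b ^ 2 * (t : ℂ) ^ 2 / 2)
      * (b ^ 2 * (t : ℂ) ^ 2) ^ γ) (Set.Ici 1) := by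
  intro t ht
  have ht1 : (1:ℝ) ≤ t := ht
  apply ContinuousAt.continuousWithinAt
  have hu_cont : ContinuousAt (fun z : ℝ => b ^ 2 * (z : ℂ) ^ 2) t :=
    Continuous.continuousAt (by continuity)
  apply ContinuousAt.mul
  · exact (Complex.continuous_exp.continuousAt).comp (hu_cont.div_const 2)
  · have hslit : b ^ 2 * (t : ℂ) ^ 2 ∈ Complex.slitPlane := by
      left; rw [u_re]; positivity
    exact ContinuousAt.comp (f := fun z : ℝ => b ^ 2 * (z : ℂ) ^ 2)
      (continuousAt_cpow_const hslit) hu_cont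

lemma eps_cont (w b : ℂ) (hb : b ≠ 0) :
    ContinuousOn (fun t : ℝ => w / (b ^ 2 * (t : ℂ) ^ 2)) (Set.Ici 1) := by
  apply continuousOn_const.div
  · exact Continuous.continuousOn (by continuity)
  · intro t ht
    have ht1 : (1:ℝ) ≤ t := ht
    have htC : (t : ℂ) ≠ 0 := Complex.ofReal_ne_zero.2 (by positivity)
    exact mul_ne_zero (pow_ne_zero _ hb) (pow_ne_zero _ htC)

lemma eps_lim (w b : ℂ) (hb : b ≠ 0) :
    Tendsto (fun t : ℝ => w / (b ^ 2 * (t : ℂ) ^ 2)) atTop (nhds 0) := by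
  have h0 : Tendsto (fun t : ℝ => ((t : ℝ) ^ 2)⁻¹) atTop (nhds 0) :=
    (tendsto_pow_atTop two_ne_zero).inv_tendsto_atTop
  have h1 : Tendsto (fun t : ℝ => (((t ^ 2)⁻¹ : ℝ) : ℂ)) atTop (nhds 0) := by
    have := (Complex.continuous_ofReal.tendsto 0).comp h0
    simpa [Function.comp_def] using this
  have h2 := h1.mul_const (w / b ^ 2)
  rw [zero_mul] at h2
  apply h2.congr'
  filter_upwards [eventually_ge_atTop (1:ℝ)] with t ht
  have htC : (t : ℂ) ≠ 0 := Complex.ofReal_ne_zero.2 (by positivity)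
  push_cast
  field_simp

lemma part1 (γ b : ℂ) (hb : b ≠ 0)
    (harg : Complex.arg b ∈ Set.Ioo (-(Real.pi / 4)) (Real.pi / 4))
    (ha : 0 < (b ^ 2).re) :
    IsEquivalent atTop
      (fun z : ℝ => ∫ t in (1:ℝ)..z, Complex.exp (b ^ 2 * (t : ℂ) ^ 2 / 2) * (b ^ 2 * (t : ℂ) ^ 2) ^ γ)
      (fun z : ℝ => 1 / b * Complex.exp (b ^ 2 * (z : ℂ) ^ 2 / 2)
        * (b ^ 2 * (z : ℂ) ^ 2) ^ γ / (b * (z : ℂ))) := by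
  set a : ℝ := (b ^ 2).re with hadef
  set c₀ : ℝ := ‖b‖ ^ (2 * γ.re) / Real.exp (Complex.arg (b ^ 2) * γ.im) with hc₀def
  have habsb : 0 < ‖b‖ := norm_pos_iff.mpr hb
  have hc₀ : 0 < c₀ := by positivity
  -- norm of F
  have norm_F : ∀ z : ℝ, 1 ≤ z →
      ‖1 / b * Complex.exp (b ^ 2 * (z : ℂ) ^ 2 / 2) * (b ^ 2 * (z : ℂ) ^ 2) ^ γ / (b * (z : ℂ))‖
        = c₀ / ‖b‖ ^ 2 * (Real.exp (a * z ^ 2 / 2) * z ^ (2 * γ.re - 1)) := by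
    intro z hz
    have hz0 : (0:ℝ) < z := by linarith
    have e : 1 / b * Complex.exp (b ^ 2 * (z : ℂ) ^ 2 / 2) * (b ^ 2 * (z : ℂ) ^ 2) ^ γ / (b * (z : ℂ))
        = Complex.exp (b ^ 2 * (z : ℂ) ^ 2 / 2) * (b ^ 2 * (z : ℂ) ^ 2) ^ γ * (1 / b) / (b * (z : ℂ)) := by
      ring
    rw [e, norm_div, norm_mul, norm_h γ b hb hz0, norm_div, norm_one, norm_mul]
    rw [Complex.norm_real, Real.norm_eq_abs, abs_of_pos hz0]
    have hz2 : z ^ (2 * γ.re - 1) = z ^ (2 * γ.re) / z := by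
      rw [Real.rpow_sub hz0, Real.rpow_one]
    rw [hz2]
    field_simp
    rw [hc₀def, ← hadef]
    field_simp
  -- limit of ‖F‖
  have hFlim : Tendsto (fun z : ℝ => ‖1 / b * Complex.exp (b ^ 2 * (z : ℂ) ^ 2 / 2)
      * (b ^ 2 * (z : ℂ) ^ 2) ^ γ / (b * (z : ℂ))‖) atTop atTop := by
    have h1 : Tendsto (fun z : ℝ => c₀ / ‖b‖ ^ 2
        * (Real.exp (a * z ^ 2 / 2) * z ^ (2 * γ.re - 1))) atTop atTop :=
      (tendsto_exp_sq_rpow a (2 * γ.re - 1) ha).const_mul_atTop (by positivity)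
    apply h1.congr'
    filter_upwards [eventually_ge_atTop (1:ℝ)] with z hz
    rw [norm_F z hz]
  -- integral bound
  have hint : ∀ᶠ z in atTop, (∫ t in (1:ℝ)..z,
      ‖Complex.exp (b ^ 2 * (t : ℂ) ^ 2 / 2) * (b ^ 2 * (t : ℂ) ^ 2) ^ γ‖)
      ≤ (3 * ‖b‖ ^ 2 / a) * ‖1 / b * Complex.exp (b ^ 2 * (z : ℂ) ^ 2 / 2)
        * (b ^ 2 * (z : ℂ) ^ 2) ^ γ / (b * (z : ℂ))‖ := by
    filter_upwards [intP_le a (2 * γ.re) ha, eventually_ge_atTop (1:ℝ)] with z h1 hz1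
    have heq : (∫ t in (1:ℝ)..z, ‖Complex.exp (b ^ 2 * (t : ℂ) ^ 2 / 2) * (b ^ 2 * (t : ℂ) ^ 2) ^ γ‖)
        = c₀ * ∫ t in (1:ℝ)..z, Real.exp (a * t ^ 2 / 2) * t ^ (2 * γ.re) := by
      rw [← intervalIntegral.integral_const_mul]
      apply intervalIntegral.integral_congr
      intro t htt
      rw [Set.uIcc_of_le hz1] at htt
      exact norm_h γ b hb (by linarith [htt.1] : (0:ℝ) < t)
    rw [heq, norm_F z hz1]
    have h2 : c₀ * (∫ t in (1:ℝ)..z, Real.exp (a * t ^ 2 / 2) * t ^ (2 * γ.re))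
        ≤ c₀ * (3 / a * (Real.exp (a * z ^ 2 / 2) * z ^ (2 * γ.re - 1))) :=
      mul_le_mul_of_nonneg_left h1 hc₀.le
    have h3 : c₀ * (3 / a * (Real.exp (a * z ^ 2 / 2) * z ^ (2 * γ.re - 1)))
        = 3 * ‖b‖ ^ 2 / a * (c₀ / ‖b‖ ^ 2
          * (Real.exp (a * z ^ 2 / 2) * z ^ (2 * γ.re - 1))) := by
      field_simp
    linarith
  exact key _ _ (fun t : ℝ => (2 * γ - 1) / (b ^ 2 * (t : ℂ) ^ 2)) _
    (hcont_exp_pow γ b hb ha) (eps_cont _ b hb)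
    (fun t ht => deriv1 γ b hb ha (by intro h; rw [h] at ht; exact absurd ht (by norm_num)))
    (eps_lim _ b hb) hFlim hint


lemma part2 (γ b : ℂ) (hb : b ≠ 0)
    (harg : Complex.arg b ∈ Set.Ioo (-(Real.pi / 4)) (Real.pi / 4))
    (ha : 0 < (b ^ 2).re) :
    IsEquivalent atTop
      (fun z : ℝ => ∫ t in (1:ℝ)..z,
        Complex.exp (b ^ 2 * (t : ℂ) ^ 2 / 2) * (b ^ 2 * (t : ℂ) ^ 2) ^ γ * (b * (t : ℂ)))
      (fun z : ℝ => 1 / b * Complex.exp (b ^ 2 * (z : ℂ) ^ 2 / 2) * (b ^ 2 * (z : ℂ) ^ 2) ^ γ) := by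
  set a : ℝ := (b ^ 2).re with hadef
  set c₀ : ℝ := ‖b‖ ^ (2 * γ.re) / Real.exp (Complex.arg (b ^ 2) * γ.im) with hc₀def
  have habsb : 0 < ‖b‖ := norm_pos_iff.mpr hb
  have hc₀ : 0 < c₀ := by positivity
  have norm_h2 : ∀ t : ℝ, 0 < t →
      ‖Complex.exp (b ^ 2 * (t : ℂ) ^ 2 / 2) * (b ^ 2 * (t : ℂ) ^ 2) ^ γ * (b * (t : ℂ))‖
        = c₀ * ‖b‖ * (Real.exp (a * t ^ 2 / 2) * t ^ (2 * γ.re + 1)) := by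
    intro t ht0
    rw [norm_mul, norm_h γ b hb ht0, norm_mul, Complex.norm_real, Real.norm_eq_abs,
      abs_of_pos ht0]
    have : t ^ (2 * γ.re + 1) = t ^ (2 * γ.re) * t := by
      rw [Real.rpow_add ht0, Real.rpow_one]
    rw [this, hc₀def, ← hadef]
    ring
  have norm_F : ∀ z : ℝ, 0 < z →
      ‖1 / b * Complex.exp (b ^ 2 * (z : ℂ) ^ 2 / 2) * (b ^ 2 * (z : ℂ) ^ 2) ^ γ‖
        = c₀ / ‖b‖ * (Real.exp (a * z ^ 2 / 2) * z ^ (2 * γ.re)) := by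
    intro z hz0
    have e : 1 / b * Complex.exp (b ^ 2 * (z : ℂ) ^ 2 / 2) * (b ^ 2 * (z : ℂ) ^ 2) ^ γ
        = Complex.exp (b ^ 2 * (z : ℂ) ^ 2 / 2) * (b ^ 2 * (z : ℂ) ^ 2) ^ γ * (1 / b) := by
      ring
    rw [e, norm_mul, norm_h γ b hb hz0, norm_div, norm_one, hc₀def, ← hadef]
    field_simp
  have hFlim : Tendsto (fun z : ℝ => ‖1 / b * Complex.exp (b ^ 2 * (z : ℂ) ^ 2 / 2)
      * (b ^ 2 * (z : ℂ) ^ 2) ^ γ‖) atTop atTop := by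
    have h1 : Tendsto (fun z : ℝ => c₀ / ‖b‖
        * (Real.exp (a * z ^ 2 / 2) * z ^ (2 * γ.re))) atTop atTop :=
      (tendsto_exp_sq_rpow a (2 * γ.re) ha).const_mul_atTop (by positivity)
    apply h1.congr'
    filter_upwards [eventually_gt_atTop (0:ℝ)] with z hz
    rw [norm_F z hz]
  have hint : ∀ᶠ z in atTop, (∫ t in (1:ℝ)..z,
      ‖Complex.exp (b ^ 2 * (t : ℂ) ^ 2 / 2) * (b ^ 2 * (t : ℂ) ^ 2) ^ γ * (b * (t : ℂ))‖)
      ≤ (3 * ‖b‖ ^ 2 / a) * ‖1 / b * Complex.exp (b ^ 2 * (z : ℂ) ^ 2 / 2)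
        * (b ^ 2 * (z : ℂ) ^ 2) ^ γ‖ := by
    filter_upwards [intP_le a (2 * γ.re + 1) ha, eventually_ge_atTop (1:ℝ)] with z h1 hz1
    have hz0 : (0:ℝ) < z := by linarith
    have heq : (∫ t in (1:ℝ)..z, ‖Complex.exp (b ^ 2 * (t : ℂ) ^ 2 / 2)
        * (b ^ 2 * (t : ℂ) ^ 2) ^ γ * (b * (t : ℂ))‖)
        = c₀ * ‖b‖ * ∫ t in (1:ℝ)..z, Real.exp (a * t ^ 2 / 2) * t ^ (2 * γ.re + 1) := by
      rw [← intervalIntegral.integral_const_mul]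
      apply intervalIntegral.integral_congr
      intro t htt
      rw [Set.uIcc_of_le hz1] at htt
      exact norm_h2 t (by linarith [htt.1])
    rw [heq, norm_F z hz0]
    have h2 : c₀ * ‖b‖ * (∫ t in (1:ℝ)..z, Real.exp (a * t ^ 2 / 2) * t ^ (2 * γ.re + 1))
        ≤ c₀ * ‖b‖ * (3 / a * (Real.exp (a * z ^ 2 / 2) * z ^ (2 * γ.re + 1 - 1))) :=
      mul_le_mul_of_nonneg_left h1 (by positivity)
    have e2 : (2 * γ.re + 1 - 1 : ℝ) = 2 * γ.re := by ring
    rw [e2] at h2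
    have h3 : c₀ * ‖b‖ * (3 / a * (Real.exp (a * z ^ 2 / 2) * z ^ (2 * γ.re)))
        = 3 * ‖b‖ ^ 2 / a * (c₀ / ‖b‖
          * (Real.exp (a * z ^ 2 / 2) * z ^ (2 * γ.re))) := by
      field_simp
    linarith
  have hcont2 : ContinuousOn (fun t : ℝ => Complex.exp (b ^ 2 * (t : ℂ) ^ 2 / 2)
      * (b ^ 2 * (t : ℂ) ^ 2) ^ γ * (b * (t : ℂ))) (Set.Ici 1) :=
    (hcont_exp_pow γ b hb ha).mul (Continuous.continuousOn (by continuity))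
  exact key _ _ (fun t : ℝ => 2 * γ / (b ^ 2 * (t : ℂ) ^ 2)) _
    hcont2 (eps_cont _ b hb)
    (fun t ht => deriv2 γ b hb ha (by intro h; rw [h] at ht; exact absurd ht (by norm_num)))
    (eps_lim _ b hb) hFlim hint

theorem statement12 (γ b : ℂ) (hb : b ≠ 0)
    (harg : Complex.arg b ∈ Set.Ioo (-(Real.pi / 4)) (Real.pi / 4)) :
    IsEquivalent atTop
      (fun z : ℝ => ∫ t in (1:ℝ)..z, Complex.exp (b ^ 2 * (t : ℂ) ^ 2 / 2) * (b ^ 2 * (t : ℂ) ^ 2) ^ γ)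
      (fun z : ℝ => 1 / b * Complex.exp (b ^ 2 * (z : ℂ) ^ 2 / 2)
        * (b ^ 2 * (z : ℂ) ^ 2) ^ γ / (b * (z : ℂ))) ∧
    IsEquivalent atTop
      (fun z : ℝ => ∫ t in (1:ℝ)..z,
        Complex.exp (b ^ 2 * (t : ℂ) ^ 2 / 2) * (b ^ 2 * (t : ℂ) ^ 2) ^ γ * (b * (t : ℂ)))
      (fun z : ℝ => 1 / b * Complex.exp (b ^ 2 * (z : ℂ) ^ 2 / 2) * (b ^ 2 * (z : ℂ) ^ 2) ^ γ) ∧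
    IsEquivalent atBot
      (fun z : ℝ => ∫ t in (-1:ℝ)..z, Complex.exp (b ^ 2 * (t : ℂ) ^ 2 / 2) * (b ^ 2 * (t : ℂ) ^ 2) ^ γ)
      (fun z : ℝ => 1 / b * Complex.exp (b ^ 2 * (z : ℂ) ^ 2 / 2)
        * (b ^ 2 * (z : ℂ) ^ 2) ^ γ / (b * (z : ℂ))) ∧
    IsEquivalent atBot
      (fun z : ℝ => ∫ t in (-1:ℝ)..z,
        Complex.exp (b ^ 2 * (t : ℂ) ^ 2 / 2) * (b ^ 2 * (t : ℂ) ^ 2) ^ γ * (b * (t : ℂ)))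
      (fun z : ℝ => 1 / b * Complex.exp (b ^ 2 * (z : ℂ) ^ 2 / 2) * (b ^ 2 * (z : ℂ) ^ 2) ^ γ) := by
  have ha := b2_re_pos b hb harg
  have p1 := part1 γ b hb harg ha
  have p2 := part2 γ b hb harg ha
  have heven : ∀ x : ℝ,
      Complex.exp (b ^ 2 * ((-x : ℝ) : ℂ) ^ 2 / 2) * (b ^ 2 * ((-x : ℝ) : ℂ) ^ 2) ^ γ
        = Complex.exp (b ^ 2 * (x : ℂ) ^ 2 / 2) * (b ^ 2 * (x : ℂ) ^ 2) ^ γ := by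
    intro x
    push_cast
    rw [neg_sq]
  have hodd : ∀ x : ℝ,
      Complex.exp (b ^ 2 * ((-x : ℝ) : ℂ) ^ 2 / 2) * (b ^ 2 * ((-x : ℝ) : ℂ) ^ 2) ^ γ
        * (b * ((-x : ℝ) : ℂ))
        = -(Complex.exp (b ^ 2 * (x : ℂ) ^ 2 / 2) * (b ^ 2 * (x : ℂ) ^ 2) ^ γ * (b * (x : ℂ))) := by
    intro x
    push_cast
    rw [neg_sq]
    ring
  -- integral reflections
  have hint1 : ∀ z : ℝ,
      (∫ t in (-1:ℝ)..z, Complex.exp (b ^ 2 * (t : ℂ) ^ 2 / 2) * (b ^ 2 * (t : ℂ) ^ 2) ^ γ)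
        = -(∫ t in (1:ℝ)..(-z), Complex.exp (b ^ 2 * (t : ℂ) ^ 2 / 2) * (b ^ 2 * (t : ℂ) ^ 2) ^ γ) := by
    intro z
    have e2 : (∫ t in (-1:ℝ)..z,
        Complex.exp (b ^ 2 * (t : ℂ) ^ 2 / 2) * (b ^ 2 * (t : ℂ) ^ 2) ^ γ)
        = ∫ t in (-1:ℝ)..z,
          Complex.exp (b ^ 2 * ((-t : ℝ) : ℂ) ^ 2 / 2) * (b ^ 2 * ((-t : ℝ) : ℂ) ^ 2) ^ γ := by
      apply intervalIntegral.integral_congr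
      intro t _
      exact (heven t).symm
    rw [e2]
    have e1 := intervalIntegral.integral_comp_neg (a := (-1:ℝ)) (b := z)
      (f := fun t : ℝ => Complex.exp (b ^ 2 * (t : ℂ) ^ 2 / 2) * (b ^ 2 * (t : ℂ) ^ 2) ^ γ)
    push_cast at e1 ⊢
    rw [e1]
    norm_num
    rw [intervalIntegral.integral_symm]
  have hint2 : ∀ z : ℝ,
      (∫ t in (-1:ℝ)..z, Complex.exp (b ^ 2 * (t : ℂ) ^ 2 / 2) * (b ^ 2 * (t : ℂ) ^ 2) ^ γ
        * (b * (t : ℂ)))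
        = ∫ t in (1:ℝ)..(-z), Complex.exp (b ^ 2 * (t : ℂ) ^ 2 / 2) * (b ^ 2 * (t : ℂ) ^ 2) ^ γ
          * (b * (t : ℂ)) := by
    intro z
    have e2 : (∫ t in (-1:ℝ)..z,
        Complex.exp (b ^ 2 * (t : ℂ) ^ 2 / 2) * (b ^ 2 * (t : ℂ) ^ 2) ^ γ * (b * (t : ℂ)))
        = ∫ t in (-1:ℝ)..z, -(Complex.exp (b ^ 2 * ((-t : ℝ) : ℂ) ^ 2 / 2)
            * (b ^ 2 * ((-t : ℝ) : ℂ) ^ 2) ^ γ * (b * ((-t : ℝ) : ℂ))) := by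
      apply intervalIntegral.integral_congr
      intro t _
      simp only [hodd, neg_neg]
    rw [e2, intervalIntegral.integral_neg]
    have e1 := intervalIntegral.integral_comp_neg (a := (-1:ℝ)) (b := z)
      (f := fun t : ℝ => Complex.exp (b ^ 2 * (t : ℂ) ^ 2 / 2) * (b ^ 2 * (t : ℂ) ^ 2) ^ γ
        * (b * (t : ℂ)))
    push_cast at e1 ⊢
    rw [e1]
    norm_num
    rw [intervalIntegral.integral_symm (-z) (1:ℝ)]
  refine ⟨p1, p2, ?_, ?_⟩
  · -- part 3
    have c1 : IsEquivalent atBot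
        (fun z : ℝ => ∫ t in (1:ℝ)..(-z),
          Complex.exp (b ^ 2 * (t : ℂ) ^ 2 / 2) * (b ^ 2 * (t : ℂ) ^ 2) ^ γ)
        (fun z : ℝ => 1 / b * Complex.exp (b ^ 2 * ((-z : ℝ) : ℂ) ^ 2 / 2)
          * (b ^ 2 * ((-z : ℝ) : ℂ) ^ 2) ^ γ / (b * ((-z : ℝ) : ℂ))) :=
      IsLittleO.comp_tendsto p1 tendsto_neg_atBot_atTop
    have c2 := c1.neg
    have ef : (fun z : ℝ => -(∫ t in (1:ℝ)..(-z),
        Complex.exp (b ^ 2 * (t : ℂ) ^ 2 / 2) * (b ^ 2 * (t : ℂ) ^ 2) ^ γ))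
        = fun z : ℝ => ∫ t in (-1:ℝ)..z,
          Complex.exp (b ^ 2 * (t : ℂ) ^ 2 / 2) * (b ^ 2 * (t : ℂ) ^ 2) ^ γ := by
      funext z
      rw [hint1 z]
    have eg : (fun z : ℝ => -(1 / b * Complex.exp (b ^ 2 * ((-z : ℝ) : ℂ) ^ 2 / 2)
        * (b ^ 2 * ((-z : ℝ) : ℂ) ^ 2) ^ γ / (b * ((-z : ℝ) : ℂ))))
        = fun z : ℝ => 1 / b * Complex.exp (b ^ 2 * (z : ℂ) ^ 2 / 2)
          * (b ^ 2 * (z : ℂ) ^ 2) ^ γ / (b * (z : ℂ)) := by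
      funext z
      push_cast
      rw [neg_sq]
      ring
    rw [ef, eg] at c2
    exact c2
  · -- part 4
    have c1 : IsEquivalent atBot
        (fun z : ℝ => ∫ t in (1:ℝ)..(-z),
          Complex.exp (b ^ 2 * (t : ℂ) ^ 2 / 2) * (b ^ 2 * (t : ℂ) ^ 2) ^ γ * (b * (t : ℂ)))
        (fun z : ℝ => 1 / b * Complex.exp (b ^ 2 * ((-z : ℝ) : ℂ) ^ 2 / 2)
          * (b ^ 2 * ((-z : ℝ) : ℂ) ^ 2) ^ γ) :=
      IsLittleO.comp_tendsto p2 tendsto_neg_atBot_atTop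
    have ef : (fun z : ℝ => ∫ t in (1:ℝ)..(-z),
        Complex.exp (b ^ 2 * (t : ℂ) ^ 2 / 2) * (b ^ 2 * (t : ℂ) ^ 2) ^ γ * (b * (t : ℂ)))
        = fun z : ℝ => ∫ t in (-1:ℝ)..z,
          Complex.exp (b ^ 2 * (t : ℂ) ^ 2 / 2) * (b ^ 2 * (t : ℂ) ^ 2) ^ γ * (b * (t : ℂ)) := by
      funext z
      rw [hint2 z]
    have eg : (fun z : ℝ => 1 / b * Complex.exp (b ^ 2 * ((-z : ℝ) : ℂ) ^ 2 / 2)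
        * (b ^ 2 * ((-z : ℝ) : ℂ) ^ 2) ^ γ)
        = fun z : ℝ => 1 / b * Complex.exp (b ^ 2 * (z : ℂ) ^ 2 / 2)
          * (b ^ 2 * (z : ℂ) ^ 2) ^ γ := by
      funext z
      push_cast
      rw [neg_sq]
    rw [ef, eg] at c1
    exact c1
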